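/- For every x ∈ (0,1), one has h(x²)/(x·h(x)) ≥ h(φ²)/(φ·h(φ)) = 1/φ; that is, the function x ↦ h(x²)/(x·h(x)) on (0,1) attains its minimum at x = φ, where the minimum value is 1/φ. -/

import Mathlib

set_option maxHeartbeats 2000000

theorem log_quintic (t : ℝ) (ht : -1 < t) :
    Real.log (1+t) ≤ t - t^2/2 + t^3/3 - t^4/4 + t^5/5 := by
  have key : ∀ y : ℝ, -1 < y → HasDerivAt
      (fun z : ℝ => z - z^2/2 + z^3/3 - z^4/4 + z^5/5 - Real.log (1+z)) (y^5/(1+y)) y := by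
    intro y hy
    have h1 : (0:ℝ) < 1 + y := by linarith
    have hlog : HasDerivAt (fun z : ℝ => Real.log (1+z)) (1/(1+y)) y := by
      have h := Real.hasDerivAt_log h1.ne'
      have h2 : HasDerivAt (fun z : ℝ => 1+z) 1 y := (hasDerivAt_id y).const_add 1
      exact h2.log h1.ne'
    have hpoly : HasDerivAt (fun z : ℝ => z - z^2/2 + z^3/3 - z^4/4 + z^5/5)
        (1 - (2*y^1)/2 + (3*y^2)/3 - (4*y^3)/4 + (5*y^4)/5) y := by
      exact ((((hasDerivAt_id y).sub ((hasDerivAt_pow 2 y).div_const 2)).add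
        ((hasDerivAt_pow 3 y).div_const 3)).sub ((hasDerivAt_pow 4 y).div_const 4)).add
        ((hasDerivAt_pow 5 y).div_const 5)
    have := hpoly.sub hlog
    refine this.congr_deriv ?_
    rw [eq_div_iff h1.ne', sub_mul, one_div, inv_mul_cancel₀ h1.ne']
    ring
  set F := fun z : ℝ => z - z^2/2 + z^3/3 - z^4/4 + z^5/5 - Real.log (1+z) with hF
  have hF0 : F 0 = 0 := by simp [hF]
  have main : 0 ≤ F t := by
    rcases le_or_gt 0 t with h | h
    · have mono : MonotoneOn F (Set.Ici 0) := by
        apply monotoneOn_of_deriv_nonneg (convex_Ici 0)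
        · intro y hy
          exact (key y (by simp at hy; linarith)).differentiableAt.continuousAt.continuousWithinAt
        · intro y hy
          rw [interior_Ici] at hy
          exact ((key y (by simp at hy; linarith)).differentiableAt).differentiableWithinAt
        · intro y hy
          rw [interior_Ici] at hy; simp at hy
          rw [(key y (by linarith)).deriv]
          positivity
      have := mono (Set.mem_Ici.2 le_rfl) (Set.mem_Ici.2 h) h
      rw [hF0] at this; exact this
    · have anti : AntitoneOn F (Set.Icc t 0) := by
        apply antitoneOn_of_deriv_nonpos (convex_Icc t 0)
        · intro y hy
          simp only [Set.mem_Icc] at hy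
          exact (key y (by linarith [hy.1])).differentiableAt.continuousAt.continuousWithinAt
        · intro y hy
          rw [interior_Icc] at hy
          exact ((key y (by linarith [hy.1])).differentiableAt).differentiableWithinAt
        · intro y hy
          rw [interior_Icc] at hy
          obtain ⟨hy1, hy2⟩ := hy
          rw [(key y (by linarith)).deriv]
          apply div_nonpos_of_nonpos_of_nonneg
          · nlinarith [pow_nonneg (show (0:ℝ) ≤ -y by linarith) 5]
          · linarith
      have := anti (Set.mem_Icc.2 ⟨le_rfl, h.le⟩) (Set.mem_Icc.2 ⟨h.le, le_rfl⟩) h.le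
      rw [hF0] at this; exact this
  simp only [hF] at main
  linarith


private lemma RA_nonneg (x p : ℝ) (hx0 : 0 < x) (hx1 : x ≤ 1/10)
    (hp1 : (0.6180339:ℝ) < p) (hp2 : p < (0.6180340:ℝ)) :
    (0:ℝ) ≤ (-1321/400:ℝ)*x^2 + (1121/200:ℝ)*x^2*p + (1/2:ℝ)*x^3 + (1/6:ℝ)*x^4
      - (1/2:ℝ)*x^4*p + (1/12:ℝ)*x^5 + (1/20:ℝ)*x^6 - (1/2:ℝ)*x^6*p + (1/5:ℝ)*x^7 := by
  nlinarith [sq_nonneg x, pow_pos hx0 2, pow_pos hx0 3, pow_pos hx0 4, pow_pos hx0 5,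
    pow_pos hx0 6, pow_pos hx0 7,
    mul_pos (pow_pos hx0 2) (show (0:ℝ) < 1 - x by linarith)]

private lemma RB_nonneg (x p : ℝ) (hx0 : 1/10 ≤ x) (hx1 : x ≤ 2/5)
    (hp1 : (0.6180339:ℝ) < p) (hp2 : p < (0.6180340:ℝ)) :
    (0:ℝ) ≤ (-48529/121500000:ℝ)*p + (5591/24300000:ℝ)*x + (3368/759375:ℝ)*x*p
      - (1892959001/405000000:ℝ)*x^2 + (840091483/101250000:ℝ)*x^2*p + (1664/81:ℝ)*x^3
      - (30216832/759375:ℝ)*x^3*p - (19456/243:ℝ)*x^4 + (120712832/759375:ℝ)*x^4*p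
      + (17344/81:ℝ)*x^5 - (539285504/1265625:ℝ)*x^5*p - (130048/405:ℝ)*x^6
      + (486060032/759375:ℝ)*x^6*p + (249856/1215:ℝ)*x^7 - (1558151168/3796875:ℝ)*x^7*p := by
  have hA : (0:ℝ) ≤ x - 1/10 := by linarith
  have hB : (0:ℝ) ≤ 2/5 - x := by linarith
  have hl : (0:ℝ) ≤ p - 0.6180339 := by linarith
  nlinarith [mul_nonneg (pow_nonneg hA 7) (pow_nonneg hB 0), mul_nonneg (pow_nonneg hA 6) (pow_nonneg hB 1),
    mul_nonneg (pow_nonneg hA 5) (pow_nonneg hB 2), mul_nonneg (pow_nonneg hA 4) (pow_nonneg hB 3),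
    mul_nonneg (pow_nonneg hA 3) (pow_nonneg hB 4), mul_nonneg (pow_nonneg hA 2) (pow_nonneg hB 5),
    mul_nonneg (pow_nonneg hA 1) (pow_nonneg hB 6), mul_nonneg (pow_nonneg hA 0) (pow_nonneg hB 7),
    mul_nonneg hl (mul_nonneg (pow_nonneg hA 6) (pow_nonneg hB 1)),
    mul_nonneg hl (mul_nonneg (pow_nonneg hA 5) (pow_nonneg hB 2)),
    mul_nonneg hl (mul_nonneg (pow_nonneg hA 4) (pow_nonneg hB 3)),
    mul_nonneg hl (mul_nonneg (pow_nonneg hA 3) (pow_nonneg hB 4)),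
    mul_nonneg hl (mul_nonneg (pow_nonneg hA 2) (pow_nonneg hB 5)),
    mul_nonneg hl (mul_nonneg (pow_nonneg hA 1) (pow_nonneg hB 6)),
    mul_nonneg hl (mul_nonneg (pow_nonneg hA 7) (pow_nonneg hB 0)),
    mul_nonneg hl (mul_nonneg (pow_nonneg hA 0) (pow_nonneg hB 7))]

private lemma S_nonneg (x p : ℝ) (hx0 : 2/5 ≤ x) (hx1 : x ≤ 19/20)
    (hp1 : (0.6180339:ℝ) < p) (hp2 : p < (0.6180340:ℝ)) :
    (0:ℝ) ≤ (-109/6:ℝ) + (313/12:ℝ)*p - (1/12:ℝ)*x + (143/6:ℝ)*x*p - (331/12:ℝ)*x^2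
      - (251/12:ℝ)*x^2*p + (99/2:ℝ)*x^3 + (37/4:ℝ)*x^3*p - (83/4:ℝ)*x^4 - (25:ℝ)*x^4*p
      + (37/5:ℝ)*x^5 + (12/5:ℝ)*x^5*p := by
  have hA : (0:ℝ) ≤ x - 2/5 := by linarith
  have hB : (0:ℝ) ≤ 19/20 - x := by linarith
  have hl : (0:ℝ) ≤ p - 0.6180339 := by linarith
  nlinarith [mul_nonneg (pow_nonneg hA 5) (pow_nonneg hB 0), mul_nonneg (pow_nonneg hA 4) (pow_nonneg hB 1),
    mul_nonneg (pow_nonneg hA 3) (pow_nonneg hB 2), mul_nonneg (pow_nonneg hA 2) (pow_nonneg hB 3),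
    mul_nonneg (pow_nonneg hA 1) (pow_nonneg hB 4), mul_nonneg (pow_nonneg hA 0) (pow_nonneg hB 5),
    mul_nonneg hl (mul_nonneg (pow_nonneg hA 4) (pow_nonneg hB 1)),
    mul_nonneg hl (mul_nonneg (pow_nonneg hA 3) (pow_nonneg hB 2)),
    mul_nonneg hl (mul_nonneg (pow_nonneg hA 2) (pow_nonneg hB 3)),
    mul_nonneg hl (mul_nonneg (pow_nonneg hA 1) (pow_nonneg hB 4)),
    mul_nonneg hl (mul_nonneg (pow_nonneg hA 5) (pow_nonneg hB 0)),
    mul_nonneg hl (mul_nonneg (pow_nonneg hA 0) (pow_nonneg hB 5))]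

private lemma RD_nonneg (x p : ℝ) (hx0 : 19/20 ≤ x) (hx1 : x ≤ 1)
    (hp1 : (0.6180339:ℝ) < p) (hp2 : p < (0.6180340:ℝ)) :
    (0:ℝ) ≤ (3503191/1250000:ℝ)*p - (29957/10000:ℝ)*x - (1/2:ℝ)*x*p + (19957/10000:ℝ)*x^2
      - (1003191/1250000:ℝ)*x^2*p + (1:ℝ)*x^3 - (3/2:ℝ)*x^3*p := by
  nlinarith [mul_nonneg (sub_nonneg.2 hx0) (sub_nonneg.2 hx1), sq_nonneg (x-1),
    mul_nonneg (sub_nonneg.2 hx0) (sq_nonneg (x-1))]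

/-- The binary entropy function (base 2), with `h 0 = h 1 = 0`
(note `Real.logb 2 0 = 0` by convention). -/
noncomputable def binEnt (x : ℝ) : ℝ :=
  -(x * Real.logb 2 x) - (1 - x) * Real.logb 2 (1 - x)

/-- The function `x ↦ h(x²)/(x h(x))` on `(0,1)` attains its minimum at `x = φ = (√5-1)/2`,
where its value is `1/φ`. -/
theorem h_frac_min :
    (∀ x ∈ Set.Ioo (0 : ℝ) 1,
      binEnt (x ^ 2) / (x * binEnt x) ≥ 1 / ((Real.sqrt 5 - 1) / 2)) ∧
    binEnt (((Real.sqrt 5 - 1) / 2) ^ 2) /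
        (((Real.sqrt 5 - 1) / 2) * binEnt ((Real.sqrt 5 - 1) / 2)) =
      1 / ((Real.sqrt 5 - 1) / 2) := by
  have hs5 : Real.sqrt 5 ^ 2 = 5 := Real.sq_sqrt (by norm_num)
  have hs5nn : (0:ℝ) ≤ Real.sqrt 5 := Real.sqrt_nonneg 5
  have hsl : (2.2360679:ℝ) < Real.sqrt 5 := by nlinarith
  have hsu : Real.sqrt 5 < (2.2360680:ℝ) := by nlinarith
  set p : ℝ := (Real.sqrt 5 - 1)/2 with hpdef
  have hphi : p^2 + p - 1 = 0 := by rw [hpdef]; linear_combination (1/4) * hs5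
  have hp1 : (0.6180339:ℝ) < p := by rw [hpdef]; norm_num; linarith
  have hp2 : p < (0.6180340:ℝ) := by rw [hpdef]; norm_num; linarith
  have hp0 : 0 < p := by linarith
  have hpl1 : p < 1 := by linarith
  -- positivity of binEnt on (0,1)
  have entPos : ∀ y : ℝ, 0 < y → y < 1 → 0 < binEnt y := by
    intro y h0 h1
    have h2 : Real.logb 2 y < 0 := Real.logb_neg (by norm_num) h0 h1
    have h3 : Real.logb 2 (1-y) < 0 := Real.logb_neg (by norm_num) (by linarith) (by linarith)
    unfold binEnt
    nlinarith
  -- numeric log bounds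
  have hlog2l : (0.6931471:ℝ) < Real.log 2 := lt_trans (by norm_num) Real.log_two_gt_d9
  have hlog2u : Real.log 2 < (0.6931472:ℝ) := Real.log_two_lt_d9.trans (by norm_num)
  have h54u : Real.log (5/4) ≤ (2233/10000:ℝ) := by
    have h := log_quintic (1/4) (by norm_num)
    norm_num at h
    linarith
  have h54l : (22312/100000:ℝ) ≤ Real.log (5/4) := by
    have h := log_quintic (-(1/5)) (by norm_num)
    have h2 : Real.log (5/4) = - Real.log (4/5) := by
      rw [show (5:ℝ)/4 = ((4:ℝ)/5)⁻¹ by norm_num, Real.log_inv]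
    norm_num at h
    rw [h2]
    linarith
  have h34 : Real.log (3/4) ≤ -(287630/1000000:ℝ) := by
    have h := log_quintic (-(1/4)) (by norm_num)
    norm_num at h
    linarith
  have hlog5 : Real.log 5 = 2*Real.log 2 + Real.log (5/4) := by
    rw [show (5:ℝ) = 2^2*(5/4) by norm_num,
      Real.log_mul (by norm_num) (by norm_num), Real.log_pow]
    push_cast; ring
  -- the core inequality with natural logarithms
  have core : ∀ x : ℝ, 0 < x → x < 1 →
      0 ≤ p * (-(x^2*(2*Real.log x)) - (1-x^2)*(Real.log (1-x) + Real.log (1+x)))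
          - x * (-(x*Real.log x) - (1-x)*Real.log (1-x)) := by
    intro x hx0 hx1
    set lx := Real.log x with hlxdef
    set l1 := Real.log (1-x) with hl1def
    set l2 := Real.log (1+x) with hl2def
    have hc1 : (0:ℝ) ≤ (2*p-1)*x^2 := mul_nonneg (by linarith) (sq_nonneg x)
    have hc2 : (0:ℝ) ≤ p*(1-x)*(1-p*x) := by
      have : p*x < 1 := by nlinarith
      have h1x : (0:ℝ) < 1 - x := by linarith
      nlinarith
    have hc3 : (0:ℝ) ≤ p*(1-x^2) := by nlinarith
    -- generic quintic bounds for l1 and l2 (used in regions A, B)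
    have hl1q : l1 ≤ -x - x^2/2 - x^3/3 - x^4/4 - x^5/5 := by
      have h := log_quintic (-x) (by linarith)
      rw [show (1:ℝ) + -x = 1 - x by ring] at h
      rw [hl1def]; linarith [h]
    have hl2q : l2 ≤ x - x^2/2 + x^3/3 - x^4/4 + x^5/5 := by
      have h := log_quintic x (by linarith)
      rw [hl2def]; linarith [h]
    rcases le_or_gt x (1/10) with hA | hA
    · -- Region A : 0 < x ≤ 1/10
      have hlxA : lx ≤ -(23025/10000:ℝ) := by
        have h1 : Real.log x ≤ Real.log (1/10) := Real.log_le_log hx0 hA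
        have h2 : Real.log ((1:ℝ)/10) = -(Real.log 2 + Real.log 5) := by
          rw [show (1:ℝ)/10 = ((10:ℝ))⁻¹ by norm_num, Real.log_inv,
            show (10:ℝ) = 2*5 by norm_num, Real.log_mul (by norm_num) (by norm_num)]
        rw [hlxdef]
        rw [h2] at h1
        rw [hlog5] at h1
        linarith
      have hs1 : (0:ℝ) ≤ ((2*p-1)*x^2) * (-(23025/10000:ℝ) - lx) :=
        mul_nonneg hc1 (by linarith)
      have hs2 : (0:ℝ) ≤ (p*(1-x)*(1-p*x)) * ((-x - x^2/2 - x^3/3 - x^4/4 - x^5/5) - l1) :=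
        mul_nonneg hc2 (by linarith)
      have hs3 : (0:ℝ) ≤ (p*(1-x^2)) * ((x - x^2/2 + x^3/3 - x^4/4 + x^5/5) - l2) :=
        mul_nonneg hc3 (by linarith)
      have hRA := RA_nonneg x p hx0 hA hp1 hp2
      have hid : p * (-(x^2*(2*lx)) - (1-x^2)*(l1 + l2)) - x * (-(x*lx) - (1-x)*l1)
          = ((2*p-1)*x^2) * (-(23025/10000:ℝ) - lx)
            + (p*(1-x)*(1-p*x)) * ((-x - x^2/2 - x^3/3 - x^4/4 - x^5/5) - l1)
            + (p*(1-x^2)) * ((x - x^2/2 + x^3/3 - x^4/4 + x^5/5) - l2)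
            + ((-1321/400:ℝ)*x^2 + (1121/200:ℝ)*x^2*p + (1/2:ℝ)*x^3 + (1/6:ℝ)*x^4
              - (1/2:ℝ)*x^4*p + (1/12:ℝ)*x^5 + (1/20:ℝ)*x^6 - (1/2:ℝ)*x^6*p + (1/5:ℝ)*x^7) := by
        linear_combination ((-1:ℝ)*x*l1 - (1:ℝ)*x^2 + (1:ℝ)*x^2*l1 + (1/2:ℝ)*x^3 + (1/6:ℝ)*x^4
          + (1/12:ℝ)*x^5 + (1/20:ℝ)*x^6 + (1/5:ℝ)*x^7) * hphi
      rw [hid]; linarith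
    · rcases le_or_gt x (2/5) with hB | hB
      · -- Region B : 1/10 ≤ x ≤ 2/5
        have hlxB : lx ≤ -(13862942/10000000:ℝ) + ((4*x-1) - (4*x-1)^2/2 + (4*x-1)^3/3
            - (4*x-1)^4/4 + (4*x-1)^5/5) := by
          have hq := log_quintic (4*x-1) (by linarith)
          rw [show (1:ℝ) + (4*x-1) = 4*x by ring] at hq
          have he : Real.log x = Real.log (1/4) + Real.log (4*x) := by
            rw [← Real.log_mul (by norm_num) (by positivity),
              show (1:ℝ)/4*(4*x) = x by ring]
          have h14 : Real.log ((1:ℝ)/4) = -(2*Real.log 2) := by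
            rw [show (1:ℝ)/4 = ((2:ℝ)^2)⁻¹ by norm_num, Real.log_inv, Real.log_pow]
            push_cast; ring
          rw [hlxdef, he, h14]
          linarith
        have hl1B : l1 ≤ -(287630/1000000:ℝ) + ((1-4*x)/3 - ((1-4*x)/3)^2/2 + ((1-4*x)/3)^3/3
            - ((1-4*x)/3)^4/4 + ((1-4*x)/3)^5/5) := by
          have hq := log_quintic ((1-4*x)/3) (by nlinarith)
          have he : Real.log (1-x) = Real.log (3/4) + Real.log (1 + (1-4*x)/3) := by
            rw [← Real.log_mul (by norm_num) (by nlinarith),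
              show (3:ℝ)/4*(1 + (1-4*x)/3) = 1-x by ring]
          rw [hl1def, he]
          linarith
        have hl2B : l2 ≤ (2233/10000:ℝ) + ((4*x-1)/5 - ((4*x-1)/5)^2/2 + ((4*x-1)/5)^3/3
            - ((4*x-1)/5)^4/4 + ((4*x-1)/5)^5/5) := by
          have hq := log_quintic ((4*x-1)/5) (by nlinarith)
          have he : Real.log (1+x) = Real.log (5/4) + Real.log (1 + (4*x-1)/5) := by
            rw [← Real.log_mul (by norm_num) (by nlinarith),
              show (5:ℝ)/4*(1 + (4*x-1)/5) = 1+x by ring]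
          rw [hl2def, he]
          linarith
        have hs1 : (0:ℝ) ≤ ((2*p-1)*x^2) * ((-(13862942/10000000:ℝ) + ((4*x-1) - (4*x-1)^2/2
            + (4*x-1)^3/3 - (4*x-1)^4/4 + (4*x-1)^5/5)) - lx) := mul_nonneg hc1 (by linarith)
        have hs2 : (0:ℝ) ≤ (p*(1-x)*(1-p*x)) * ((-(287630/1000000:ℝ) + ((1-4*x)/3
            - ((1-4*x)/3)^2/2 + ((1-4*x)/3)^3/3 - ((1-4*x)/3)^4/4 + ((1-4*x)/3)^5/5)) - l1) :=
          mul_nonneg hc2 (by linarith)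
        have hs3 : (0:ℝ) ≤ (p*(1-x^2)) * (((2233/10000:ℝ) + ((4*x-1)/5 - ((4*x-1)/5)^2/2
            + ((4*x-1)/5)^3/3 - ((4*x-1)/5)^4/4 + ((4*x-1)/5)^5/5)) - l2) :=
          mul_nonneg hc3 (by linarith)
        have hRB := RB_nonneg x p hA.le hB hp1 hp2
        have hid : p * (-(x^2*(2*lx)) - (1-x^2)*(l1 + l2)) - x * (-(x*lx) - (1-x)*l1)
            = ((2*p-1)*x^2) * ((-(13862942/10000000:ℝ) + ((4*x-1) - (4*x-1)^2/2
                + (4*x-1)^3/3 - (4*x-1)^4/4 + (4*x-1)^5/5)) - lx)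
              + (p*(1-x)*(1-p*x)) * ((-(287630/1000000:ℝ) + ((1-4*x)/3
                - ((1-4*x)/3)^2/2 + ((1-4*x)/3)^3/3 - ((1-4*x)/3)^4/4 + ((1-4*x)/3)^5/5)) - l1)
              + (p*(1-x^2)) * (((2233/10000:ℝ) + ((4*x-1)/5 - ((4*x-1)/5)^2/2
                + ((4*x-1)/5)^3/3 - ((4*x-1)/5)^4/4 + ((4*x-1)/5)^5/5)) - l2)
              + ((-48529/121500000:ℝ)*p + (5591/24300000:ℝ)*x + (3368/759375:ℝ)*x*p
                - (1892959001/405000000:ℝ)*x^2 + (840091483/101250000:ℝ)*x^2*p + (1664/81:ℝ)*x^3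
                - (30216832/759375:ℝ)*x^3*p - (19456/243:ℝ)*x^4 + (120712832/759375:ℝ)*x^4*p
                + (17344/81:ℝ)*x^5 - (539285504/1265625:ℝ)*x^5*p - (130048/405:ℝ)*x^6
                + (486060032/759375:ℝ)*x^6*p + (249856/1215:ℝ)*x^7
                - (1558151168/3796875:ℝ)*x^7*p) := by
          linear_combination ((5591/24300000:ℝ)*x - (1:ℝ)*x*l1 - (8135197/8100000:ℝ)*x^2
            + (1:ℝ)*x^2*l1 + (44/81:ℝ)*x^3 - (16/243:ℝ)*x^4 + (64/81:ℝ)*x^5 - (448/405:ℝ)*x^6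
            + (1024/1215:ℝ)*x^7) * hphi
        rw [hid]; linarith
      · rcases le_or_gt x (19/20) with hC | hC
        · -- Region C : 2/5 ≤ x ≤ 19/20, anchored at p
          set L := Real.log p with hLdef
          have hLq : L ≤ (p-1) - (p-1)^2/2 + (p-1)^3/3 - (p-1)^4/4 + (p-1)^5/5 := by
            have h := log_quintic (p-1) (by linarith)
            rw [show (1:ℝ) + (p-1) = p by ring] at h
            rw [hLdef]; linarith
          have h1u : (1:ℝ) + (x-p)*(1+p) = x*(1+p) := by linear_combination (-1:ℝ) * hphi
          have h1upos : (0:ℝ) < 1 + (x-p)*(1+p) := by rw [h1u]; positivity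
          have hlxC : lx ≤ L + (((x-p)*(1+p)) - ((x-p)*(1+p))^2/2 + ((x-p)*(1+p))^3/3
              - ((x-p)*(1+p))^4/4 + ((x-p)*(1+p))^5/5) := by
            have hq := log_quintic ((x-p)*(1+p)) (by linarith)
            have hxe : p*(1 + (x-p)*(1+p)) = x := by
              linear_combination ((-1:ℝ)*p + (1:ℝ)*x) * hphi
            have he : Real.log x = L + Real.log (1 + (x-p)*(1+p)) := by
              rw [hLdef, ← Real.log_mul hp0.ne' h1upos.ne', hxe]
            rw [hlxdef, he]
            linarith
          have h1m : (1:ℝ) + (p-x)*(2+p) = (2+p)*(1-x) := by linear_combination hphi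
          have h1mpos : (0:ℝ) < 1 + (p-x)*(2+p) := by rw [h1m]; nlinarith
          have hl1C : l1 ≤ 2*L + (((p-x)*(2+p)) - ((p-x)*(2+p))^2/2 + ((p-x)*(2+p))^3/3
              - ((p-x)*(2+p))^4/4 + ((p-x)*(2+p))^5/5) := by
            have hq := log_quintic ((p-x)*(2+p)) (by linarith)
            have hxe : p^2*(1 + (p-x)*(2+p)) = 1-x := by
              linear_combination ((1:ℝ) + (1:ℝ)*p + (1:ℝ)*p^2 - (1:ℝ)*x - (1:ℝ)*x*p) * hphi
            have hsq2 : Real.log (p^2) = 2*L := by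
              rw [Real.log_pow]; rw [hLdef]; push_cast; ring
            have he : Real.log (1-x) = 2*L + Real.log (1 + (p-x)*(2+p)) := by
              rw [← hxe, Real.log_mul (by positivity) h1mpos.ne', hsq2]
            rw [hl1def, he]
            linarith
          have h1w : (1:ℝ) + p*(x-p) = p*(1+x) := by linear_combination (-1:ℝ) * hphi
          have h1wpos : (0:ℝ) < 1 + p*(x-p) := by rw [h1w]; positivity
          have hl2C : l2 ≤ -L + ((p*(x-p)) - (p*(x-p))^2/2 + (p*(x-p))^3/3
              - (p*(x-p))^4/4 + (p*(x-p))^5/5) := by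
            have hq := log_quintic (p*(x-p)) (by linarith)
            have honep : (1+p)*p = 1 := by linear_combination hphi
            have hlog1p : Real.log (1+p) = -L := by
              have := Real.log_mul (show (1:ℝ)+p ≠ 0 by positivity) hp0.ne'
              rw [honep, Real.log_one] at this
              rw [hLdef]; linarith
            have hxe : (1+p)*(1 + p*(x-p)) = 1+x := by
              linear_combination ((-1:ℝ)*p + (1:ℝ)*x) * hphi
            have he : Real.log (1+x) = -L + Real.log (1 + p*(x-p)) := by
              rw [← hxe, Real.log_mul (by positivity) h1wpos.ne', hlog1p]
            rw [hl2def, he]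
            linarith
          have hs1 : (0:ℝ) ≤ ((2*p-1)*x^2) * ((L + (((x-p)*(1+p)) - ((x-p)*(1+p))^2/2
              + ((x-p)*(1+p))^3/3 - ((x-p)*(1+p))^4/4 + ((x-p)*(1+p))^5/5)) - lx) :=
            mul_nonneg hc1 (by linarith)
          have hs2 : (0:ℝ) ≤ (p*(1-x)*(1-p*x)) * ((2*L + (((p-x)*(2+p)) - ((p-x)*(2+p))^2/2
              + ((p-x)*(2+p))^3/3 - ((p-x)*(2+p))^4/4 + ((p-x)*(2+p))^5/5)) - l1) :=
            mul_nonneg hc2 (by linarith)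
          have hs3 : (0:ℝ) ≤ (p*(1-x^2)) * ((-L + ((p*(x-p)) - (p*(x-p))^2/2 + (p*(x-p))^3/3
              - (p*(x-p))^4/4 + (p*(x-p))^5/5)) - l2) :=
            mul_nonneg hc3 (by linarith)
          have hs4 : (0:ℝ) ≤ ((x-p)^2*(1+p)) * (((p-1) - (p-1)^2/2 + (p-1)^3/3 - (p-1)^4/4
              + (p-1)^5/5) - L) :=
            mul_nonneg (mul_nonneg (sq_nonneg _) (by linarith)) (by linarith)
          have hS := S_nonneg x p hB.le hC hp1 hp2
          have hid : p * (-(x^2*(2*lx)) - (1-x^2)*(l1 + l2)) - x * (-(x*lx) - (1-x)*l1)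
              = ((2*p-1)*x^2) * ((L + (((x-p)*(1+p)) - ((x-p)*(1+p))^2/2
                  + ((x-p)*(1+p))^3/3 - ((x-p)*(1+p))^4/4 + ((x-p)*(1+p))^5/5)) - lx)
                + (p*(1-x)*(1-p*x)) * ((2*L + (((p-x)*(2+p)) - ((p-x)*(2+p))^2/2
                  + ((p-x)*(2+p))^3/3 - ((p-x)*(2+p))^4/4 + ((p-x)*(2+p))^5/5)) - l1)
                + (p*(1-x^2)) * ((-L + ((p*(x-p)) - (p*(x-p))^2/2 + (p*(x-p))^3/3
                  - (p*(x-p))^4/4 + (p*(x-p))^5/5)) - l2)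
                + ((x-p)^2*(1+p)) * (((p-1) - (p-1)^2/2 + (p-1)^3/3 - (p-1)^4/4
                  + (p-1)^5/5) - L)
                + (x-p)^2 * ((-109/6:ℝ) + (313/12:ℝ)*p - (1/12:ℝ)*x + (143/6:ℝ)*x*p
                  - (331/12:ℝ)*x^2 - (251/12:ℝ)*x^2*p + (99/2:ℝ)*x^3 + (37/4:ℝ)*x^3*p
                  - (83/4:ℝ)*x^4 - (25:ℝ)*x^4*p + (37/5:ℝ)*x^5 + (12/5:ℝ)*x^5*p) := by
            linear_combination ((1:ℝ)*p*L - (369/20:ℝ)*p^2 + (167/20:ℝ)*p^3 - (283/30:ℝ)*p^4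
              - (15/4:ℝ)*p^5 - (107/10:ℝ)*p^6 - (11/2:ℝ)*p^7 - (2:ℝ)*p^8 - (1:ℝ)*x*l1
              + (389/10:ℝ)*x*p - (1007/60:ℝ)*x*p^2 + (819/20:ℝ)*x*p^3 + (203/6:ℝ)*x*p^4
              + (1289/20:ℝ)*x*p^5 + (2669/60:ℝ)*x*p^6 + (129/5:ℝ)*x*p^7 + (159/20:ℝ)*x*p^8
              + (2:ℝ)*x*p^9 + (1/5:ℝ)*x*p^10 - (409/20:ℝ)*x^2 + (1:ℝ)*x^2*l1 - (2:ℝ)*x^2*L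
              + (571/60:ℝ)*x^2*p - (4901/60:ℝ)*x^2*p^2 - (1265/12:ℝ)*x^2*p^3
              - (2489/15:ℝ)*x^2*p^4 - (2213/15:ℝ)*x^2*p^5 - (313/3:ℝ)*x^2*p^6
              - (239/5:ℝ)*x^2*p^7 - (291/20:ℝ)*x^2*p^8 - (13/5:ℝ)*x^2*p^9 - (1/5:ℝ)*x^2*p^10
              - (13/12:ℝ)*x^3 + (309/4:ℝ)*x^3*p + (347/2:ℝ)*x^3*p^2 + (473/2:ℝ)*x^3*p^3
              + (523/2:ℝ)*x^3*p^4 + (208:ℝ)*x^3*p^5 + (243/2:ℝ)*x^3*p^6 + (43:ℝ)*x^3*p^7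
              + (10:ℝ)*x^3*p^8 + (1:ℝ)*x^3*p^9 - (325/12:ℝ)*x^4 - (442/3:ℝ)*x^4*p
              - (200:ℝ)*x^4*p^2 - (1613/6:ℝ)*x^4*p^3 - (235:ℝ)*x^4*p^4 - (167:ℝ)*x^4*p^5
              - (133/2:ℝ)*x^4*p^6 - (18:ℝ)*x^4*p^7 - (2:ℝ)*x^4*p^8 + (295/6:ℝ)*x^5
              + (5771/60:ℝ)*x^5*p + (1933/12:ℝ)*x^5*p^2 + (466/3:ℝ)*x^5*p^3
              + (523/4:ℝ)*x^5*p^4 + (57:ℝ)*x^5*p^5 + (17:ℝ)*x^5*p^6 + (2:ℝ)*x^5*p^7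
              - (41/2:ℝ)*x^6 - (262/5:ℝ)*x^6*p - (284/5:ℝ)*x^6*p^2 - (276/5:ℝ)*x^6*p^3
              - (103/4:ℝ)*x^6*p^4 - (41/5:ℝ)*x^6*p^5 - (1:ℝ)*x^6*p^6 + (36/5:ℝ)*x^7
              + (9:ℝ)*x^7*p + (49/5:ℝ)*x^7*p^2 + (24/5:ℝ)*x^7*p^3 + (8/5:ℝ)*x^7*p^4
              + (1/5:ℝ)*x^7*p^5) * hphi
          rw [hid]
          have hSq : (0:ℝ) ≤ (x-p)^2 * ((-109/6:ℝ) + (313/12:ℝ)*p - (1/12:ℝ)*x + (143/6:ℝ)*x*p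
              - (331/12:ℝ)*x^2 - (251/12:ℝ)*x^2*p + (99/2:ℝ)*x^3 + (37/4:ℝ)*x^3*p
              - (83/4:ℝ)*x^4 - (25:ℝ)*x^4*p + (37/5:ℝ)*x^5 + (12/5:ℝ)*x^5*p) :=
            mul_nonneg (sq_nonneg _) hS
          linarith
        · -- Region D : 19/20 ≤ x < 1
          have hlxD : lx ≤ x - 1 := by
            rw [hlxdef]; exact Real.log_le_sub_one_of_pos hx0
          have hl1D : l1 ≤ -(29957/10000:ℝ) := by
            have h1 : Real.log (1-x) ≤ Real.log (1/20) := by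
              apply Real.log_le_log (by linarith)
              linarith
            have h2 : Real.log ((1:ℝ)/20) = -(4*Real.log 2 + Real.log (5/4)) := by
              rw [show (1:ℝ)/20 = ((20:ℝ))⁻¹ by norm_num, Real.log_inv,
                show (20:ℝ) = 2^4*(5/4) by norm_num,
                Real.log_mul (by norm_num) (by norm_num), Real.log_pow]
              push_cast; ring
            rw [hl1def]
            rw [h2] at h1
            linarith
          have hl2D : l2 ≤ (6931472/10000000:ℝ) + (x-1)/2 := by
            have h1 : Real.log ((1+x)/2) ≤ (1+x)/2 - 1 :=
              Real.log_le_sub_one_of_pos (by linarith)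
            have h2 : Real.log ((1+x)/2) = Real.log (1+x) - Real.log 2 :=
              Real.log_div (by linarith) (by norm_num)
            rw [hl2def]
            rw [h2] at h1
            linarith
          have hs1 : (0:ℝ) ≤ ((2*p-1)*x^2) * ((x-1) - lx) := mul_nonneg hc1 (by linarith)
          have hs2 : (0:ℝ) ≤ (p*(1-x)*(1-p*x)) * ((-(29957/10000:ℝ)) - l1) :=
            mul_nonneg hc2 (by linarith)
          have hs3 : (0:ℝ) ≤ (p*(1-x^2)) * (((6931472/10000000:ℝ) + (x-1)/2) - l2) :=
            mul_nonneg hc3 (by linarith)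
          have hRD := RD_nonneg x p hC.le hx1.le hp1 hp2
          have hid : p * (-(x^2*(2*lx)) - (1-x^2)*(l1 + l2)) - x * (-(x*lx) - (1-x)*l1)
              = ((2*p-1)*x^2) * ((x-1) - lx)
                + (p*(1-x)*(1-p*x)) * ((-(29957/10000:ℝ)) - l1)
                + (p*(1-x^2)) * (((6931472/10000000:ℝ) + (x-1)/2) - l2)
                + ((3503191/1250000:ℝ)*p - (29957/10000:ℝ)*x - (1/2:ℝ)*x*p
                  + (19957/10000:ℝ)*x^2 - (1003191/1250000:ℝ)*x^2*p + (1:ℝ)*x^3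
                  - (3/2:ℝ)*x^3*p) := by
            linear_combination ((-29957/10000:ℝ)*x - (1:ℝ)*x*l1 + (29957/10000:ℝ)*x^2
              + (1:ℝ)*x^2*l1) * hphi
          rw [hid]; linarith
  constructor
  · -- part 1
    intro x hx
    obtain ⟨hx0, hx1⟩ := hx
    have hE1 : 0 < binEnt x := entPos x hx0 hx1
    have hx2 : x^2 < 1 := by nlinarith
    have hx2' : 0 < x^2 := pow_pos hx0 2
    rw [ge_iff_le, div_le_div_iff₀ hp0 (mul_pos hx0 hE1)]
    have hL2 : 0 < Real.log 2 := Real.log_pos (by norm_num)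
    have hlbx : binEnt x * Real.log 2 = -(x*Real.log x) - (1-x)*Real.log (1-x) := by
      unfold binEnt
      rw [Real.logb, Real.logb]
      field_simp
    have hlbx2 : binEnt (x^2) * Real.log 2
        = -(x^2*(2*Real.log x)) - (1-x^2)*(Real.log (1-x) + Real.log (1+x)) := by
      unfold binEnt
      rw [Real.logb, Real.logb]
      have e1 : Real.log (x^2) = 2*Real.log x := by
        rw [Real.log_pow]; push_cast; ring
      have e2 : Real.log (1-x^2) = Real.log (1-x) + Real.log (1+x) := by
        rw [show (1:ℝ)-x^2 = (1-x)*(1+x) by ring,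
          Real.log_mul (by linarith) (by linarith)]
      rw [e1, e2]
      field_simp
    have hcore := core x hx0 hx1
    rw [one_mul, ← mul_le_mul_iff_of_pos_right hL2]
    have e1 : x * binEnt x * Real.log 2 = x * (-(x*Real.log x) - (1-x)*Real.log (1-x)) := by
      linear_combination x * hlbx
    have e2 : binEnt (x^2) * p * Real.log 2
        = p * (-(x^2*(2*Real.log x)) - (1-x^2)*(Real.log (1-x) + Real.log (1+x))) := by
      linear_combination p * hlbx2
    rw [e1, e2]
    linarith
  · -- part 2 : equality at p
    have hE : 0 < binEnt p := entPos p hp0 hpl1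
    have hsq : p^2 = 1 - p := by linear_combination hphi
    have hsym : binEnt (p^2) = binEnt p := by
      rw [hsq]
      unfold binEnt
      rw [show (1:ℝ) - (1-p) = p by ring]
      ring
    rw [hsym]
    rw [div_eq_div_iff (by positivity) (by positivity)]
    ring
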